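/- Let π: X → B be a surjective morphism of smooth affine algebraic varieties (so ℂ[B] ⊆ ℂ[X]). Let η be a locally nilpotent or semi-simple vector field on X with ℂ[B] ⊆ Ker η. Let α₁, …, α_k be regular functions on B without common zeros, D_i = (α_i ∘ π)^{-1}(0), and let ξ₁, …, ξ_k be locally nilpotent vector fields on X such that α_i ∈ Ker ξ_i and the restriction of the pair (ξ_i, η) to X_i = X \ D_i is compatible. Then there exists a nonzero ideal J ⊆ ℂ[X] such that J·η ⊆ Lie_alg(X). -/

import Mathlib

/-!
STATEMENT 12 (Theorem `ap1`): Let π : X → B be a surjective morphism of smooth affine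
algebraic varieties (so ℂ[B] ⊆ ℂ[X]).  Let η be a locally nilpotent or semi-simple vector
field on X with ℂ[B] ⊆ Ker η.  Let α₁, …, α_k be regular functions on B without common
zeros, D_i = (α_i ∘ π)⁻¹(0), and let ξ₁, …, ξ_k be locally nilpotent vector fields on X
such that α_i ∈ Ker ξ_i and the restriction of the pair (ξ_i, η) to X_i = X \ D_i is
compatible.  Then there exists a nonzero ideal J ⊆ ℂ[X] with J·η ⊆ Lie_alg(X).

Modelling conventions: X, B are given by their coordinate rings `A`, `R` (finitely
generated integral smooth ℂ-algebras) and π by the comorphism `πs : R →ₐ[ℂ] A`;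
surjectivity of π is surjectivity on ℂ-points.  Vector fields are ℂ-derivations;
`Ker ξ = {a | ξ a = 0}`.  On the principal open set X_i = {α_i ∘ π ≠ 0} the coordinate
ring is the localization at `πs (α i)`, so:
 * the pair (ξ_i, η) is semi-compatible on X_i iff there is a nonzero ideal I of ℂ[X]
   every element h of which satisfies `α_i^l · h ∈ span((Ker ξ_i)·(Ker η))` for some l
   (clearing denominators);
 * compatibility additionally requires an element `a ∈ Ker η` (on X_i, equivalently in
   ℂ[X] since α_i ∈ Ker η) of ξ_i-degree 1: ξ_i a ≠ 0 and ξ_i² a = 0.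
Complete fields / Lie_alg(X) are as in the other files.
-/

noncomputable section
attribute [local instance 10] Classical.propDecidable

def IsCompleteField {A : Type*} [CommRing A] [Algebra ℂ A] (ξ : Derivation ℂ A A) : Prop :=
  ∀ p : A →ₐ[ℂ] ℂ, ∃ γ : ℂ → (A →ₐ[ℂ] ℂ), γ 0 = p ∧
    ∀ (a : A) (t : ℂ), HasDerivAt (fun s => (γ s) a) ((γ t) (ξ a)) t

def LieAlgGen (A : Type*) [CommRing A] [Algebra ℂ A] : LieSubalgebra ℂ (Derivation ℂ A A) :=
  LieSubalgebra.lieSpan ℂ (Derivation ℂ A A) {ξ | IsCompleteField ξ}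

/-- Locally nilpotent vector field. -/
def IsLND {A : Type*} [CommRing A] [Algebra ℂ A] (ξ : Derivation ℂ A A) : Prop :=
  ∀ a : A, ∃ N : ℕ, (ξ.toLinearMap ^ N) a = 0

/-- Semi-simple vector field: generator of an algebraic ℂ*-action, i.e. `ℂ[X]` is
spanned by eigenvectors of ξ with integer eigenvalues. -/
def IsSemisimpleField {A : Type*} [CommRing A] [Algebra ℂ A] (ξ : Derivation ℂ A A) : Prop :=
  Submodule.span ℂ {a : A | ∃ m : ℤ, ξ a = (m : ℂ) • a} = ⊤

/-- The pair (ξ, η) is semi-compatible on the principal open set {α ≠ 0}: the span of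
(Ker ξ)·(Ker η) there contains a nonzero ideal (denominators cleared by powers of α). -/
def SemiCompatibleAway {A : Type*} [CommRing A] [Algebra ℂ A]
    (ξ η : Derivation ℂ A A) (α : A) : Prop :=
  ∃ I : Ideal A, I ≠ ⊥ ∧ ∀ h ∈ I, ∃ (l : ℕ) (m : ℕ) (f g : Fin m → A),
    (∀ j, ξ (f j) = 0) ∧ (∀ j, η (g j) = 0) ∧ α ^ l * h = ∑ j, f j * g j


variable {A : Type*} [CommRing A] [Algebra ℂ A]

open Finset in
lemma pow_leibniz {A : Type*} [CommRing A] [Algebra ℂ A] (D : Derivation ℂ A A) (n : ℕ) (x y : A) :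
    (D.toLinearMap ^ n) (x * y)
      = ∑ i ∈ range (n+1), n.choose i •
          ((D.toLinearMap ^ i) x * (D.toLinearMap ^ (n - i)) y) := by
  induction n generalizing x y with
  | zero => simp
  | succ n ih =>
    have hstep : ∀ z : A, (D.toLinearMap ^ (n+1)) z = (D.toLinearMap ^ n) (D z) := by
      intro z; rw [pow_succ, Module.End.mul_apply]; rfl
    rw [hstep (x*y)]
    have hl : D (x * y) = x * D y + y * D x := by
      simpa [smul_eq_mul] using D.leibniz x y
    rw [hl, map_add, ih x (D y), ih y (D x)]
    have h1 : ∀ m : ℕ, (D.toLinearMap ^ m) ((D : A →ₗ[ℂ] A) y) = (D.toLinearMap ^ (m + 1)) y := by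
      intro m; rw [pow_succ, Module.End.mul_apply]
    have h2 : ∀ m : ℕ, (D.toLinearMap ^ m) ((D : A →ₗ[ℂ] A) x) = (D.toLinearMap ^ (m + 1)) x := by
      intro m; rw [pow_succ, Module.End.mul_apply]
    have hDc : ∀ z : A, D z = (D : A →ₗ[ℂ] A) z := fun z => rfl
    simp only [hDc, h1, h2]
    have e2 : ∑ i ∈ range (n+1), n.choose i • ((D.toLinearMap ^ i) y * (D.toLinearMap ^ (n - i + 1)) x)
        = ∑ i ∈ range (n+1), n.choose i • ((D.toLinearMap ^ (i+1)) x * (D.toLinearMap ^ (n - i)) y) := by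
      refine Finset.sum_nbij' (fun i => n - i) (fun i => n - i) ?_ ?_ ?_ ?_ ?_
      · intro i hi; simp only [Finset.mem_range] at hi ⊢; omega
      · intro i hi; simp only [Finset.mem_range] at hi ⊢; omega
      · intro i hi; simp only [Finset.mem_range] at hi; show n - (n - i) = i; omega
      · intro i hi; simp only [Finset.mem_range] at hi; show n - (n - i) = i; omega
      · intro i hi
        simp only [Finset.mem_range] at hi
        show n.choose i • ((D.toLinearMap ^ i) y * (D.toLinearMap ^ (n - i + 1)) x)
          = n.choose (n - i) • ((D.toLinearMap ^ (n - i + 1)) x * (D.toLinearMap ^ (n - (n - i))) y)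
        have eb : n - (n - i) = i := by omega
        rw [Nat.choose_symm (by omega : i ≤ n), eb, mul_comm]
    rw [e2]
    -- target: ∑ i in range (n+2), (n+1).choose i • (D^i x * D^(n+1-i) y)
    rw [Finset.sum_range_succ' (fun i => (n+1).choose i •
      ((D.toLinearMap ^ i) x * (D.toLinearMap ^ (n + 1 - i)) y)) (n+1)]
    simp only [Nat.choose_succ_succ, Nat.choose_zero_right, pow_zero, Module.End.one_apply,
      Nat.sub_zero, add_nsmul, Finset.sum_add_distrib, one_nsmul]
    have e3 : ∀ i ∈ range (n+1), n.choose i • ((D.toLinearMap ^ (i+1)) x * (D.toLinearMap ^ (n + 1 - (i+1))) y)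
        = n.choose i • ((D.toLinearMap ^ (i+1)) x * (D.toLinearMap ^ (n - i)) y) := by
      intro i hi
      have h : n + 1 - (i+1) = n - i := by omega
      rw [h]
    rw [Finset.sum_congr rfl e3]
    -- remains: S1 = ∑ i in range (n+1), C(n,i+1) • (D^{i+1}x * D^{n+1-(i+1)}y) + x * D^{n+1} y
    have e4 : ∑ i ∈ range (n+1), n.choose i • ((D.toLinearMap ^ i) x * (D.toLinearMap ^ (n - i + 1)) y)
        = (∑ i ∈ range (n+1), n.choose (i+1) • ((D.toLinearMap ^ (i+1)) x * (D.toLinearMap ^ (n + 1 - (i+1))) y))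
          + x * (D.toLinearMap ^ (n+1)) y := by
      rw [Finset.sum_range_succ' (fun i => n.choose i •
        ((D.toLinearMap ^ i) x * (D.toLinearMap ^ (n - i + 1)) y)) n]
      rw [Finset.sum_range_succ (fun i => n.choose (i+1) •
        ((D.toLinearMap ^ (i+1)) x * (D.toLinearMap ^ (n + 1 - (i+1))) y)) n]
      simp only [Nat.choose_succ_self, zero_nsmul, add_zero, Nat.choose_zero_right, one_nsmul,
        Nat.sub_zero, pow_zero, Module.End.one_apply]
      congr 1
      refine Finset.sum_congr rfl ?_
      intro i hi
      simp only [Finset.mem_range] at hi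
      have h : n - (i+1) + 1 = n + 1 - (i+1) := by omega
      rw [h]
    rw [e4]
    ring


lemma pow_zero_of_le (D : Derivation ℂ A A) {x : A} {N n : ℕ}
    (h : (D.toLinearMap ^ N) x = 0) (hn : N ≤ n) : (D.toLinearMap ^ n) x = 0 := by
  obtain ⟨m, rfl⟩ := Nat.exists_eq_add_of_le hn
  rw [add_comm, pow_add, Module.End.mul_apply, h, map_zero]

def expC (D : Derivation ℂ A A) (hD : IsLND D) (p : A →ₐ[ℂ] ℂ) (u : ℂ) (x : A) : ℂ :=
  ∑ n ∈ Finset.range (Nat.find (hD x)), u ^ n / n.factorial * p ((D.toLinearMap ^ n) x)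

lemma expC_eq (D : Derivation ℂ A A) (hD : IsLND D) (p : A →ₐ[ℂ] ℂ) (u : ℂ) (x : A)
    {N : ℕ} (hN : Nat.find (hD x) ≤ N) :
    expC D hD p u x = ∑ n ∈ Finset.range N, u ^ n / n.factorial * p ((D.toLinearMap ^ n) x) := by
  unfold expC
  refine Finset.sum_subset (Finset.range_subset_range.mpr hN) ?_
  intro n _ hn
  simp only [Finset.mem_range, not_lt] at hn
  rw [pow_zero_of_le D (Nat.find_spec (hD x)) hn, map_zero, mul_zero]

lemma expC_vanish (D : Derivation ℂ A A) (hD : IsLND D) (p : A →ₐ[ℂ] ℂ) (u : ℂ) (x : A)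
    {n : ℕ} (hn : Nat.find (hD x) ≤ n) : (D.toLinearMap ^ n) x = 0 :=
  pow_zero_of_le D (Nat.find_spec (hD x)) hn

lemma expC_add (D : Derivation ℂ A A) (hD : IsLND D) (p : A →ₐ[ℂ] ℂ) (u : ℂ) (x y : A) :
    expC D hD p u (x + y) = expC D hD p u x + expC D hD p u y := by
  set N := max (max (Nat.find (hD x)) (Nat.find (hD y))) (Nat.find (hD (x + y))) with hNdef
  rw [expC_eq D hD p u x (le_trans (le_max_left _ _) (le_max_left _ _)),
      expC_eq D hD p u y (le_trans (le_max_right _ _) (le_max_left _ _)),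
      expC_eq D hD p u (x+y) (le_max_right _ _), ← Finset.sum_add_distrib]
  refine Finset.sum_congr rfl fun n _ => ?_
  rw [map_add, map_add, mul_add]

lemma expC_smul (D : Derivation ℂ A A) (hD : IsLND D) (p : A →ₐ[ℂ] ℂ) (u : ℂ) (c : ℂ) (x : A) :
    expC D hD p u (c • x) = c * expC D hD p u x := by
  set N := max (Nat.find (hD x)) (Nat.find (hD (c • x)))
  rw [expC_eq D hD p u x (le_max_left _ _), expC_eq D hD p u (c • x) (le_max_right _ _),
      Finset.mul_sum]
  refine Finset.sum_congr rfl fun n _ => ?_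
  rw [map_smul, map_smul, smul_eq_mul]
  ring

lemma expC_of_der_zero (D : Derivation ℂ A A) (hD : IsLND D) (p : A →ₐ[ℂ] ℂ) (u : ℂ) (x : A)
    (hx : D x = 0) : expC D hD p u x = p x := by
  have h1 : Nat.find (hD x) ≤ 1 := by
    refine Nat.find_le ?_
    rw [pow_one]; exact hx
  rw [expC_eq D hD p u x h1]
  simp

lemma expC_zero_left (D : Derivation ℂ A A) (hD : IsLND D) (p : A →ₐ[ℂ] ℂ) (x : A) :
    expC D hD p 0 x = p x := by
  rw [expC_eq D hD p 0 x (le_max_left _ 1)]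
  rcases Nat.eq_zero_or_pos (max (Nat.find (hD x)) 1) with h | h
  · have h1 : (1:ℕ) ≤ max (Nat.find (hD x)) 1 := le_max_right _ _
    omega
  · rw [Finset.sum_eq_single 0]
    · simp
    · intro n _ hn
      rw [zero_pow hn, zero_div, zero_mul]
    · intro h0; exact absurd (Finset.mem_range.mpr h) h0

open Finset in
lemma expC_mul (D : Derivation ℂ A A) (hD : IsLND D) (p : A →ₐ[ℂ] ℂ) (u : ℂ) (x y : A) :
    expC D hD p u (x * y) = expC D hD p u x * expC D hD p u y := by
  set Nx := Nat.find (hD x) with hNxd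
  set Ny := Nat.find (hD y) with hNyd
  set N := max (max Nx Ny) 1 with hNd
  have hNx : Nx ≤ N := le_trans (le_max_left _ _) (le_max_left _ _)
  have hNy : Ny ≤ N := le_trans (le_max_right _ _) (le_max_left _ _)
  have hDx0 : ∀ i, N ≤ i → (D.toLinearMap ^ i) x = 0 := fun i hi =>
    pow_zero_of_le D (Nat.find_spec (hD x)) (le_trans hNx hi)
  have hDy0 : ∀ i, N ≤ i → (D.toLinearMap ^ i) y = 0 := fun i hi =>
    pow_zero_of_le D (Nat.find_spec (hD y)) (le_trans hNy hi)
  have hxy : Nat.find (hD (x * y)) ≤ 2 * N := by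
    refine Nat.find_le ?_
    rw [pow_leibniz D (2*N) x y]
    refine Finset.sum_eq_zero fun i hi => ?_
    simp only [Finset.mem_range] at hi
    rcases le_or_gt N i with h | h
    · rw [hDx0 i h, zero_mul, smul_zero]
    · rw [hDy0 (2*N - i) (by omega), mul_zero, smul_zero]
  set F := fun i : ℕ => u ^ i / i.factorial * p ((D.toLinearMap ^ i) x) with hF
  set G := fun j : ℕ => u ^ j / j.factorial * p ((D.toLinearMap ^ j) y) with hG
  have hF0 : ∀ i, N ≤ i → F i = 0 := by
    intro i hi; rw [hF]; simp only; rw [hDx0 i hi, map_zero, mul_zero]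
  have hG0 : ∀ j, N ≤ j → G j = 0 := by
    intro j hj; rw [hG]; simp only; rw [hDy0 j hj, map_zero, mul_zero]
  rw [expC_eq D hD p u (x*y) hxy, expC_eq D hD p u x hNx, expC_eq D hD p u y hNy]
  have key : ∀ n : ℕ, p ((D.toLinearMap ^ n) (x*y))
      = ∑ i ∈ range (n+1), (n.choose i : ℂ) * (p ((D.toLinearMap ^ i) x) * p ((D.toLinearMap ^ (n-i)) y)) := by
    intro n
    rw [pow_leibniz D n x y, map_sum]
    refine Finset.sum_congr rfl fun i _ => ?_
    rw [map_nsmul, map_mul, nsmul_eq_mul]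
  have hterm : ∀ n i : ℕ, i ≤ n →
      u ^ n / n.factorial * ((n.choose i : ℂ) * (p ((D.toLinearMap ^ i) x) * p ((D.toLinearMap ^ (n-i)) y)))
      = F i * G (n - i) := by
    intro n i h
    have hfact : ((n.choose i : ℂ)) * (i.factorial : ℂ) * ((n-i).factorial : ℂ) = (n.factorial : ℂ) := by
      exact_mod_cast congrArg (Nat.cast : ℕ → ℂ) (Nat.choose_mul_factorial_mul_factorial h)
    have hpow : u ^ i * u ^ (n - i) = u ^ n := by
      rw [← pow_add]; congr 1; omega
    rw [hF, hG]
    simp only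
    have hne1 : (i.factorial : ℂ) ≠ 0 := Nat.cast_ne_zero.mpr (Nat.factorial_ne_zero i)
    have hne2 : (((n-i).factorial : ℕ) : ℂ) ≠ 0 := Nat.cast_ne_zero.mpr (Nat.factorial_ne_zero _)
    have hne3 : ((n.factorial : ℕ) : ℂ) ≠ 0 := Nat.cast_ne_zero.mpr (Nat.factorial_ne_zero n)
    field_simp
    rw [← hpow]
    linear_combination (u ^ i * u ^ (n-i) * p ((D.toLinearMap ^ i) x) * p ((D.toLinearMap ^ (n-i)) y)) * hfact
  calc ∑ n ∈ range (2*N), u ^ n / n.factorial * p ((D.toLinearMap ^ n) (x*y))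
      = ∑ n ∈ range (2*N), ∑ i ∈ range (n+1), F i * G (n - i) := by
        refine Finset.sum_congr rfl fun n _ => ?_
        rw [key n, Finset.mul_sum]
        exact Finset.sum_congr rfl fun i hi => hterm n i (by simpa [Nat.lt_succ_iff] using hi)
    _ = ∑ ij ∈ (range (2*N) ×ˢ range (2*N)).filter (fun ij => ij.1 + ij.2 < 2*N), F ij.1 * G ij.2 := by
        rw [Finset.sum_sigma']
        refine Finset.sum_nbij' (fun s => (s.2, s.1 - s.2)) (fun ij => ⟨ij.1 + ij.2, ij.1⟩) ?_ ?_ ?_ ?_ ?_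
        · rintro ⟨n, i⟩ hs
          simp only [Finset.mem_sigma, Finset.mem_range, Nat.lt_succ_iff] at hs
          simp only [Finset.mem_filter, Finset.mem_product, Finset.mem_range]
          omega
        · rintro ⟨i, j⟩ hij
          simp only [Finset.mem_filter, Finset.mem_product, Finset.mem_range] at hij
          simp only [Finset.mem_sigma, Finset.mem_range, Nat.lt_succ_iff]
          omega
        · rintro ⟨n, i⟩ hs
          simp only [Finset.mem_sigma, Finset.mem_range, Nat.lt_succ_iff] at hs
          simp only [Sigma.mk.inj_iff]
          constructor
          · omega
          · exact heq_of_eq rfl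
        · rintro ⟨i, j⟩ hij
          simp only [Finset.mem_filter, Finset.mem_product, Finset.mem_range] at hij
          simp only [Prod.mk.injEq]
          exact ⟨trivial, by omega⟩
        · rintro ⟨n, i⟩ hs
          rfl
    _ = ∑ ij ∈ range (2*N) ×ˢ range (2*N), F ij.1 * G ij.2 := by
        refine Finset.sum_subset (Finset.filter_subset _ _) ?_
        intro ij hij hnij
        have h2 : ¬ (ij.1 + ij.2 < 2*N) := fun hc => hnij (Finset.mem_filter.mpr ⟨hij, hc⟩)
        simp only [Finset.mem_product, Finset.mem_range] at hij
        rw [not_lt] at h2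
        rcases le_or_gt N ij.1 with h | h
        · rw [hF0 ij.1 h, zero_mul]
        · rw [hG0 ij.2 (by omega), mul_zero]
    _ = (∑ i ∈ range (2*N), F i) * (∑ j ∈ range (2*N), G j) := by
        rw [Finset.sum_product]
        exact (Finset.sum_mul_sum _ _ _ _).symm
    _ = (∑ i ∈ range N, F i) * (∑ j ∈ range N, G j) := by
        congr 1
        · symm; refine Finset.sum_subset (Finset.range_subset_range.mpr (by omega)) ?_
          intro i _ hi
          simp only [Finset.mem_range, not_lt] at hi
          exact hF0 i hi
        · symm; refine Finset.sum_subset (Finset.range_subset_range.mpr (by omega)) ?_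
          intro j _ hj
          simp only [Finset.mem_range, not_lt] at hj
          exact hG0 j hj


lemma aeval_eq_eval' {ι : Type} (x : ι → ℂ) (a : MvPolynomial ι ℂ) :
    (MvPolynomial.aeval x) a = MvPolynomial.eval x a := by
  rw [← MvPolynomial.coe_aeval_eq_eval]; rfl

lemma exists_char (R : Type) [CommRing R] [Algebra ℂ R] (hfg : Algebra.FiniteType ℂ R)
    (m : Ideal R) (hm : m.IsMaximal) : ∃ q : R →ₐ[ℂ] ℂ, ∀ r ∈ m, q r = 0 := by
  obtain ⟨ι, hfin, φ, hφ⟩ := Algebra.FiniteType.iff_quotient_mvPolynomial'.mp hfg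
  have hm' : (Ideal.comap φ m).IsMaximal := Ideal.comap_isMaximal_of_surjective φ hφ
  obtain ⟨x, hx⟩ := MvPolynomial.isMaximal_iff_eq_vanishingIdeal_singleton.mp hm'
  have hker : ∀ a : MvPolynomial ι ℂ, a ∈ RingHom.ker φ → (MvPolynomial.aeval x) a = 0 := by
    intro a ha
    have h2 : a ∈ Ideal.comap φ m := by
      simp only [Ideal.mem_comap]
      have : φ a = 0 := ha
      rw [this]; exact m.zero_mem
    rw [hx] at h2
    rw [aeval_eq_eval']
    exact (MvPolynomial.mem_vanishingIdeal_singleton_iff x a).mp h2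
  let e := Ideal.quotientKerAlgEquivOfSurjective hφ
  refine ⟨(Ideal.Quotient.liftₐ (RingHom.ker φ) (MvPolynomial.aeval x) hker).comp
    e.symm.toAlgHom, ?_⟩
  intro r hr
  obtain ⟨s, rfl⟩ := hφ r
  have he : e (Ideal.Quotient.mk _ s) = φ s := by
    simp only [e, Ideal.quotientKerAlgEquivOfSurjective,
      Ideal.quotientKerAlgEquivOfRightInverse_apply]
    exact RingHom.kerLift_mk _ s
  have hsymm : e.symm (φ s) = Ideal.Quotient.mk _ s := by
    rw [← he, AlgEquiv.symm_apply_apply]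
  simp only [AlgHom.comp_apply, AlgEquiv.toAlgHom_eq_coe, AlgHom.coe_coe, hsymm]
  have hs : s ∈ Ideal.comap φ m := by simpa [Ideal.mem_comap] using hr
  rw [hx] at hs
  show (Ideal.Quotient.liftₐ (RingHom.ker φ) (MvPolynomial.aeval x) hker) (e.symm (φ s)) = 0
  rw [hsymm]
  show (MvPolynomial.aeval x) s = 0
  rw [aeval_eq_eval']
  exact (MvPolynomial.mem_vanishingIdeal_singleton_iff x s).mp hs

def expHom (D : Derivation ℂ A A) (hD : IsLND D) (p : A →ₐ[ℂ] ℂ) (u : ℂ) : A →ₐ[ℂ] ℂ where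
  toFun := expC D hD p u
  map_one' := by
    rw [expC_of_der_zero D hD p u 1 D.map_one_eq_zero, map_one]
  map_mul' := expC_mul D hD p u
  map_zero' := by
    have h := expC_add D hD p u 0 0
    simp only [add_zero] at h
    nth_rewrite 1 [← add_zero (expC D hD p u 0)] at h
    exact (add_left_cancel h).symm
  map_add' := expC_add D hD p u
  commutes' := fun c => by
    show expC D hD p u _ = _
    rw [expC_of_der_zero D hD p u _ (D.map_algebraMap c), p.commutes]

lemma expHom_apply (D : Derivation ℂ A A) (hD : IsLND D) (p : A →ₐ[ℂ] ℂ) (u : ℂ) (x : A) :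
    expHom D hD p u x = expC D hD p u x := rfl

lemma expHom_zero (D : Derivation ℂ A A) (hD : IsLND D) (p : A →ₐ[ℂ] ℂ) :
    expHom D hD p 0 = p := by
  ext x
  rw [expHom_apply, expC_zero_left]

lemma expC_hasDerivAt (D : Derivation ℂ A A) (hD : IsLND D) (p : A →ₐ[ℂ] ℂ) (x : A) (t : ℂ) :
    HasDerivAt (fun s => expC D hD p s x) (expC D hD p t (D x)) t := by
  set M := max (Nat.find (hD x)) (Nat.find (hD (D x)) + 1) with hM
  have hMx : Nat.find (hD x) ≤ M := le_max_left _ _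
  have hMDx : Nat.find (hD (D x)) ≤ M - 1 := by
    have := le_max_right (Nat.find (hD x)) (Nat.find (hD (D x)) + 1); omega
  have hM1 : 1 ≤ M := by omega
  have hfun : (fun s => expC D hD p s x)
      = fun s => ∑ n ∈ Finset.range M, p ((D.toLinearMap ^ n) x) / n.factorial * s ^ n := by
    funext s
    rw [expC_eq D hD p s x hMx]
    refine Finset.sum_congr rfl fun n _ => ?_
    ring
  rw [hfun]
  have hders : HasDerivAt (fun s => ∑ n ∈ Finset.range M, p ((D.toLinearMap ^ n) x) / n.factorial * s ^ n)
      (∑ n ∈ Finset.range M, p ((D.toLinearMap ^ n) x) / n.factorial * (n * t ^ (n-1))) t := by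
    refine HasDerivAt.fun_sum fun n _ => ?_
    exact (hasDerivAt_pow n t).const_mul _
  convert hders using 1
  obtain ⟨K, hK⟩ : ∃ K, M = K + 1 := ⟨M - 1, by omega⟩
  rw [hK, Finset.sum_range_succ' (fun n => p ((D.toLinearMap ^ n) x) / n.factorial * (n * t ^ (n-1))) K]
  simp only [Nat.cast_zero, zero_mul, mul_zero, add_zero, pow_zero]
  rw [expC_eq D hD p t (D x) (by omega : Nat.find (hD (D x)) ≤ K)]
  refine Finset.sum_congr rfl fun m _ => ?_
  have hp : (D.toLinearMap ^ (m+1)) x = (D.toLinearMap ^ m) (D x) := by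
    rw [pow_succ, Module.End.mul_apply]; rfl
  rw [← hp]
  have hfac : ((m+1).factorial : ℂ) = (m+1) * (m.factorial : ℂ) := by
    rw [Nat.factorial_succ]; push_cast; ring
  have h1 : ((m:ℂ) + 1) ≠ 0 := Nat.cast_add_one_ne_zero m
  have h2 : (m.factorial : ℂ) ≠ 0 := Nat.cast_ne_zero.mpr (Nat.factorial_ne_zero m)
  field_simp [hfac]
  rw [show m + 1 - 1 = m by omega, hfac]; push_cast; ring

lemma isComplete_of_isLND {D : Derivation ℂ A A} (hD : IsLND D) : IsCompleteField D := by
  intro p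
  refine ⟨fun t => expHom D hD p t, expHom_zero D hD p, ?_⟩
  intro x t
  exact expC_hasDerivAt D hD p x t

lemma isLND_smul {D : Derivation ℂ A A} (hD : IsLND D) {f : A} (hf : D f = 0) :
    IsLND (f • D) := by
  have key : ∀ (n : ℕ) (x : A), ((f • D).toLinearMap ^ n) x = f ^ n * ((D.toLinearMap ^ n) x) := by
    intro n
    induction n with
    | zero => intro x; simp
    | succ n ih =>
      intro x
      rw [pow_succ', Module.End.mul_apply]
      rw [ih x]
      have happ : ∀ z : A, ((f • D).toLinearMap) z = f * D z := by
        intro z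
        rw [Derivation.coe_smul_linearMap, LinearMap.smul_apply, smul_eq_mul]; rfl
      rw [happ]
      have hlz : D (f ^ n * (D.toLinearMap ^ n) x) =
          f ^ n * D ((D.toLinearMap ^ n) x) + ((D.toLinearMap ^ n) x) * D (f ^ n) := by
        simpa [smul_eq_mul] using D.leibniz (f ^ n) ((D.toLinearMap ^ n) x)
      have hfn : D (f ^ n) = 0 := by
        rw [Derivation.leibniz_pow, hf, smul_zero, smul_zero]
      have hstep : D ((D.toLinearMap ^ n) x) = (D.toLinearMap ^ (n+1)) x := by
        rw [pow_succ', Module.End.mul_apply]; rfl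
      rw [hlz, hfn, hstep, mul_zero, add_zero, pow_succ']
      ring
  intro x
  obtain ⟨N, hN⟩ := hD x
  exact ⟨N, by rw [key N x, hN, mul_zero]⟩

/-- Completeness of `b • D` where `D` is LND, `D b = e`, `D e = 0` (overshear field). -/
lemma isComplete_deg1 {D : Derivation ℂ A A} (hD : IsLND D) {b e : A}
    (hb : D b = e) (he : D e = 0) : IsCompleteField (b • D) := by
  intro p
  set u : ℂ → ℂ := fun t =>
    if p e = 0 then p b * t else (p b / p e) * (Complex.exp (p e * t) - 1) with hu
  have hu0 : u 0 = 0 := by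
    rw [hu]; simp
  have hud : ∀ t, HasDerivAt u (p b + p e * u t) t := by
    intro t
    rw [hu]
    rcases eq_or_ne (p e) 0 with h | h
    · simp only [h, if_true, zero_mul, add_zero]
      simpa using (hasDerivAt_id t).const_mul (p b)
    · simp only [h, if_false]
      have h1 : HasDerivAt (fun s => Complex.exp (p e * s)) (p e * Complex.exp (p e * t)) t := by
        have := ((hasDerivAt_id t).const_mul (p e)).cexp
        simpa [mul_comm] using this
      have h2 : HasDerivAt (fun s => Complex.exp (p e * s) - 1) (p e * Complex.exp (p e * t)) t :=
        h1.sub_const 1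
      have h3 := h2.const_mul (p b / p e)
      refine h3.congr_deriv ?_
      field_simp
      ring
  refine ⟨fun t => expHom D hD p (u t), ?_, ?_⟩
  · show expHom D hD p (u 0) = p
    rw [hu0, expHom_zero]
  intro x t
  have houter := expC_hasDerivAt D hD p x (u t)
  have hcomp := HasDerivAt.comp t houter (hud t)
  have hval : expHom D hD p (u t) ((b • D) x) =
      expC D hD p (u t) (D x) * (p b + p e * u t) := by
    have h1 : (b • D) x = b * D x := by rw [Derivation.smul_apply, smul_eq_mul]
    rw [h1, expHom_apply, expC_mul]
    have h2 : expC D hD p (u t) b = p b + u t * p e := by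
      have hfind : Nat.find (hD b) ≤ 2 := by
        refine Nat.find_le ?_
        show (D.toLinearMap ^ 2) b = 0
        rw [pow_succ, Module.End.mul_apply]
        have hb' : (D : A →ₗ[ℂ] A) b = e := hb
        rw [hb']
        show (D.toLinearMap ^ 1) e = 0
        rw [pow_one]; exact he
      rw [expC_eq D hD p (u t) b hfind]
      rw [Finset.sum_range_succ, Finset.sum_range_one]
      have hb' : (D.toLinearMap ^ 1) b = e := by rw [pow_one]; exact hb
      rw [hb']
      simp [Nat.factorial]
    rw [h2]
    ring
  rw [hval]
  exact hcomp

lemma isComplete_smul_semisimple [NoZeroSMulDivisors ℂ A] {η : Derivation ℂ A A}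
    (hss : IsSemisimpleField η) {g : A} (hg : η g = 0) : IsCompleteField (g • η) := by
  intro p
  classical
  set f : Module.End ℂ A := η.toLinearMap with hf
  set V : ℤ → Submodule ℂ A := fun m => Module.End.eigenspace f ((m : ℤ) : ℂ) with hV
  have hVmem : ∀ (m : ℤ) (z : A), z ∈ V m ↔ η z = ((m : ℤ) : ℂ) • z := by
    intro m z
    rw [hV]
    exact Module.End.mem_eigenspace_iff
  have hindep : iSupIndep V := by
    refine (Module.End.eigenspaces_iSupIndep f).comp ?_
    intro m n h
    exact_mod_cast h
  have hsup : iSup V = ⊤ := by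
    rw [eq_top_iff, ← hss]
    refine Submodule.span_le.mpr ?_
    rintro a ⟨m, hm⟩
    exact Submodule.mem_iSup_of_mem m ((hVmem m a).mpr hm)
  have hInt : DirectSum.IsInternal V :=
    DirectSum.isInternal_submodule_of_iSupIndep_of_iSup_eq_top hindep hsup
  set e := LinearEquiv.ofBijective (DirectSum.coeLinearMap V) hInt with he
  set L : ℂ → (A →ₗ[ℂ] ℂ) := fun s =>
    (DirectSum.toModule ℂ ℤ ℂ (fun m => Complex.exp (s * m) • (p.toLinearMap ∘ₗ (V m).subtype)))
      ∘ₗ (e.symm : A →ₗ[ℂ] DirectSum ℤ (fun m => ↥(V m))) with hL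
  have hLa : ∀ (s : ℂ) (m : ℤ) (z : A), z ∈ V m → L s z = Complex.exp (s * m) * p z := by
    intro s m z hz
    have hd : e.symm z = DirectSum.lof ℂ ℤ (fun m => V m) m ⟨z, hz⟩ := by
      rw [LinearEquiv.symm_apply_eq]
      symm
      show DirectSum.coeLinearMap V _ = z
      rw [DirectSum.lof_eq_of, DirectSum.coeLinearMap_of]
    rw [hL]
    simp only [LinearMap.comp_apply, LinearEquiv.coe_coe]
    rw [hd, DirectSum.toModule_lof]
    simp [smul_eq_mul]
  have hL1 : ∀ s, L s 1 = 1 := by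
    intro s
    have h1 : (1 : A) ∈ V 0 := (hVmem 0 1).mpr (by simp)
    rw [hLa s 0 1 h1]
    simp
  have hLmul : ∀ s x y, L s (x * y) = L s x * L s y := by
    intro s x y
    have hx := hss
    -- span induction on x and y
    have main : ∀ x ∈ (⊤ : Submodule ℂ A), ∀ y ∈ (⊤ : Submodule ℂ A), L s (x * y) = L s x * L s y := by
      rw [← hss]
      intro x hx
      induction hx using Submodule.span_induction with
      | mem a ha =>
        intro y hy
        induction hy using Submodule.span_induction with
        | mem b hb =>
          obtain ⟨m, hm⟩ := ha
          obtain ⟨n, hn⟩ := hb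
          have hab : a * b ∈ V (m + n) := by
            rw [hVmem]
            have := η.leibniz a b
            rw [this, hm, hn]
            simp only [smul_eq_mul]
            rw [mul_smul_comm, mul_smul_comm, mul_comm b a, ← add_smul]
            congr 1
            push_cast
            ring
          rw [hLa s (m+n) _ hab, hLa s m a ((hVmem m a).mpr hm), hLa s n b ((hVmem n b).mpr hn),
            map_mul]
          push_cast
          rw [mul_add, Complex.exp_add]
          ring
        | zero => simp
        | add b c _ _ ihb ihc => rw [mul_add, map_add, map_add, ihb, ihc, mul_add]
        | smul c b _ ihb =>
          rw [mul_smul_comm, map_smul, map_smul, ihb, smul_eq_mul, smul_eq_mul]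
          ring
      | zero => intro y hy; simp
      | add a b _ _ iha ihb =>
        intro y hy
        rw [add_mul, map_add, map_add, add_mul, iha y hy, ihb y hy]
      | smul c a _ iha =>
        intro y hy
        rw [smul_mul_assoc, map_smul, map_smul, smul_eq_mul, smul_eq_mul, iha y hy]
        ring
    exact main x (by trivial) y (by trivial)
  set Γ : ℂ → (A →ₐ[ℂ] ℂ) := fun s => AlgHom.ofLinearMap (L s) (hL1 s) (hLmul s) with hΓ
  have hΓa : ∀ (s : ℂ) (x : A), Γ s x = L s x := fun s x => rfl
  have hg0 : g ∈ V 0 := (hVmem 0 g).mpr (by simpa using hg)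
  refine ⟨fun t => Γ (t * p g), ?_, ?_⟩
  · ext x
    rw [hΓa]
    -- L 0 x = p x
    have : ∀ x ∈ (⊤ : Submodule ℂ A), L ((0:ℂ) * p g) x = p x := by
      rw [← hss]
      intro x hx
      induction hx using Submodule.span_induction with
      | mem a ha =>
        obtain ⟨m, hm⟩ := ha
        rw [hLa _ m a ((hVmem m a).mpr hm)]
        simp
      | zero => simp
      | add a b _ _ iha ihb => rw [map_add, map_add, iha, ihb]
      | smul c a _ iha => rw [map_smul, map_smul, iha]
    exact this x (by trivial)
  · intro x t
    -- decompose x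
    set d := e.symm x with hd
    have hxsum : x = ∑ m ∈ DFinsupp.support d, ((d m : A)) := by
      have h1 : DirectSum.coeLinearMap V d = x := e.apply_symm_apply x
      calc x = DirectSum.coeLinearMap V d := h1.symm
        _ = DirectSum.coeLinearMap V
              (∑ i ∈ DFinsupp.support d, DirectSum.of (fun i => ↥(V i)) i (d i)) := by
            rw [DirectSum.sum_support_of d]
        _ = ∑ i ∈ DFinsupp.support d, ((d i : A)) := by
            rw [map_sum]
            exact Finset.sum_congr rfl fun m _ => DirectSum.coeLinearMap_of V m (d m)
    have hdm : ∀ m, ((d m : A)) ∈ V m := fun m => (d m).2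
    have hLx : ∀ s, L s x = ∑ m ∈ DFinsupp.support d, Complex.exp (s * m) * p (d m) := by
      intro s
      conv_lhs => rw [hxsum]
      rw [map_sum]
      exact Finset.sum_congr rfl fun m _ => hLa s m _ (hdm m)
    have hηx : η x = ∑ m ∈ DFinsupp.support d, ((m : ℤ) : ℂ) • ((d m : A)) := by
      conv_lhs => rw [hxsum]
      rw [map_sum]
      exact Finset.sum_congr rfl fun m _ => (hVmem m _).mp (hdm m)
    have hLηx : ∀ s, L s (η x) = ∑ m ∈ DFinsupp.support d,
        ((m : ℤ) : ℂ) * (Complex.exp (s * m) * p (d m)) := by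
      intro s
      rw [hηx, map_sum]
      refine Finset.sum_congr rfl fun m _ => ?_
      rw [map_smul, hLa s m _ (hdm m), smul_eq_mul]
    -- the function
    have hfun : (fun s => Γ (s * p g) x)
        = fun s => ∑ m ∈ DFinsupp.support d, Complex.exp (s * (p g * m)) * p (d m) := by
      funext s
      rw [hΓa, hLx]
      refine Finset.sum_congr rfl fun m _ => ?_
      congr 2
      ring
    rw [hfun]
    have hval : Γ (t * p g) ((g • η) x) = ∑ m ∈ DFinsupp.support d,
        (p g * m) * (Complex.exp (t * (p g * m)) * p (d m)) := by
      have h1 : (g • η) x = g * η x := by rw [Derivation.smul_apply, smul_eq_mul]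
      rw [hΓa, h1, hLmul, ← hΓa, ← hΓa]
      have hgval : Γ (t * p g) g = p g := by
        rw [hΓa, hLa _ 0 g hg0]
        simp
      rw [hgval, hΓa, hLηx, Finset.mul_sum]
      refine Finset.sum_congr rfl fun m _ => ?_
      have : t * p g * m = t * (p g * m) := by ring
      rw [this]
      ring
    rw [hval]
    refine HasDerivAt.fun_sum fun m _ => ?_
    have h1 : HasDerivAt (fun s => Complex.exp (s * (p g * m)))
        ((p g * m) * Complex.exp (t * (p g * m))) t := by
      have h2 := ((hasDerivAt_id t).mul_const (p g * m)).cexp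
      simpa [mul_comm] using h2
    have h3 := h1.mul_const (p (d m))
    refine h3.congr_deriv ?_
    ring

lemma bracket_identity (ξ η : Derivation ℂ A A) (f g a : A)
    (hf : ξ f = 0) (hg : η g = 0) (ha : η a = 0) :
    ((f * ξ a * g) • η : Derivation ℂ A A) = ⁅f • ξ, (a * g) • η⁆ - ⁅(a * f) • ξ, g • η⁆ := by
  ext x
  simp only [Derivation.sub_apply, Derivation.commutator_apply, Derivation.smul_apply,
    smul_eq_mul, Derivation.leibniz, hf, hg, ha, mul_zero, zero_mul, add_zero, zero_add]
  ring

lemma term_mem {ξ η : Derivation ℂ A A} (hξ : IsLND ξ)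
    (hηc : ∀ g : A, η g = 0 → IsCompleteField (g • η)) (a f g : A)
    (hf : ξ f = 0) (hg : η g = 0) (ha : η a = 0) (ha2 : ξ (ξ a) = 0) :
    ((f * ξ a * g) • η : Derivation ℂ A A) ∈ LieAlgGen A := by
  rw [bracket_identity ξ η f g a hf hg ha]
  have hmem1 : (f • ξ : Derivation ℂ A A) ∈ LieAlgGen A :=
    LieSubalgebra.subset_lieSpan (isComplete_of_isLND (isLND_smul hξ hf))
  have hmem2 : ((a * g) • η : Derivation ℂ A A) ∈ LieAlgGen A := by
    refine LieSubalgebra.subset_lieSpan (hηc (a * g) ?_)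
    rw [Derivation.leibniz, ha, hg, smul_zero, smul_zero, add_zero]
  have hmem3 : ((a * f) • ξ : Derivation ℂ A A) ∈ LieAlgGen A := by
    refine LieSubalgebra.subset_lieSpan (isComplete_deg1 hξ (b := a * f) (e := f * ξ a) ?_ ?_)
    · rw [Derivation.leibniz, hf, smul_zero, zero_add, smul_eq_mul]
    · rw [Derivation.leibniz, ha2, hf, smul_zero, smul_zero, add_zero]
  have hmem4 : (g • η : Derivation ℂ A A) ∈ LieAlgGen A :=
    LieSubalgebra.subset_lieSpan (hηc g hg)
  exact (LieAlgGen A).sub_mem (LieSubalgebra.lie_mem _ hmem1 hmem2)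
    (LieSubalgebra.lie_mem _ hmem3 hmem4)


theorem statement12 (A R : Type) [CommRing A] [IsDomain A] [Algebra ℂ A]
    [CommRing R] [IsDomain R] [Algebra ℂ R]
    (hfgA : Algebra.FiniteType ℂ A) (hsmA : Algebra.FormallySmooth ℂ A)
    (hfgR : Algebra.FiniteType ℂ R) (hsmR : Algebra.FormallySmooth ℂ R)
    (πs : R →ₐ[ℂ] A)
    (hπsurj : ∀ q : R →ₐ[ℂ] ℂ, ∃ p : A →ₐ[ℂ] ℂ, p.comp πs = q)
    (η : Derivation ℂ A A) (hη : IsLND η ∨ IsSemisimpleField η)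
    (hηB : ∀ r : R, η (πs r) = 0)
    (k : ℕ) (α : Fin k → R)
    (hnocommonzero : ¬ ∃ q : R →ₐ[ℂ] ℂ, ∀ i, q (α i) = 0)
    (ξ : Fin k → Derivation ℂ A A) (hξLND : ∀ i, IsLND (ξ i))
    (hξα : ∀ i, ξ i (πs (α i)) = 0)
    (hsemicompat : ∀ i, SemiCompatibleAway (ξ i) η (πs (α i)))
    (hdegree1 : ∀ i, ∃ a : A, η a = 0 ∧ ξ i a ≠ 0 ∧ ξ i (ξ i a) = 0) :
    ∃ J : Ideal A, J ≠ ⊥ ∧ ∀ f ∈ J, (f • η : Derivation ℂ A A) ∈ LieAlgGen A := by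
  classical
  haveI : NoZeroSMulDivisors ℂ A :=
    inferInstance
  -- complete fields g • η for g in ker η
  have hηc : ∀ g : A, η g = 0 → IsCompleteField (g • η) := by
    rcases hη with hLND | hss
    · intro g hg; exact isComplete_of_isLND (isLND_smul hLND hg)
    · intro g hg; exact isComplete_smul_semisimple hss hg
  -- defining data
  choose a ha1 ha2 ha3 using hdegree1
  choose I hIbot hsc using hsemicompat
  -- the predicate P
  set P : Fin k → A → Prop := fun i w => ∃ (m : ℕ) (f g : Fin m → A),
    (∀ j, ξ i (f j) = 0) ∧ (∀ j, η (g j) = 0) ∧ w = ∑ j, f j * g j with hP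
  have hPmul_ker : ∀ i w s, P i w → η s = 0 → P i (s * w) := by
    rintro i w s ⟨m, f, g, hf, hg, rfl⟩ hs
    refine ⟨m, f, fun j => s * g j, hf, ?_, ?_⟩
    · intro j; rw [Derivation.leibniz, hs, hg, smul_zero, smul_zero, add_zero]
    · rw [Finset.mul_sum]; exact Finset.sum_congr rfl fun j _ => by ring
  have hPα : ∀ i w (l : ℕ), P i w → P i (πs (α i) ^ l * w) := by
    rintro i w l ⟨m, f, g, hf, hg, rfl⟩
    refine ⟨m, fun j => πs (α i) ^ l * f j, g, ?_, hg, ?_⟩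
    · intro j
      simp [Derivation.leibniz, Derivation.leibniz_pow, hf j, hξα i]
    · rw [Finset.mul_sum]; exact Finset.sum_congr rfl fun j _ => by ring
  have hPc : ∀ i w, P i w → ((ξ i (a i) * w) • η : Derivation ℂ A A) ∈ LieAlgGen A := by
    rintro i w ⟨m, f, g, hf, hg, rfl⟩
    have hrw : ξ i (a i) * (∑ j, f j * g j) = ∑ j, (f j * ξ i (a i) * g j) := by
      rw [Finset.mul_sum]; exact Finset.sum_congr rfl fun j _ => by ring
    rw [hrw, Finset.sum_smul]
    refine Submodule.sum_mem (LieAlgGen A).toSubmodule fun j _ => ?_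
    exact term_mem (hξLND i) hηc (a i) (f j) (g j) (hf j) (hg j) (ha1 i) (ha3 i)
  -- Nullstellensatz: the α's generate the unit ideal
  have htop : Ideal.span (Set.range α) = ⊤ := by
    by_contra h
    obtain ⟨mI, hmI, hle⟩ := Ideal.exists_le_maximal _ h
    obtain ⟨q, hq⟩ := exists_char R hfgR mI hmI
    exact hnocommonzero ⟨q, fun i => hq _ (hle (Ideal.subset_span (Set.mem_range_self i)))⟩
  have hLtop : ∀ L : ℕ, ∃ s : Fin k → R, ∑ i, s i * (α i) ^ L = 1 := by
    intro L
    have h2 : Ideal.span (Set.range fun i => α i ^ L) = ⊤ := by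
      rw [← Ideal.radical_eq_top]
      rw [eq_top_iff, ← htop]
      refine Ideal.span_le.mpr ?_
      rintro r ⟨i, rfl⟩
      exact ⟨L, Ideal.subset_span ⟨i, rfl⟩⟩
    exact (Ideal.mem_span_range_iff_exists_fun).mp (h2 ▸ Submodule.mem_top)
  -- exponents for ideal elements
  have hIP : ∀ i, ∀ h ∈ I i, ∃ l₀ : ℕ, ∀ l ≥ l₀, P i (πs (α i) ^ l * h) := by
    intro i h hh
    obtain ⟨l, m, f, g, hf, hg, heq⟩ := hsc i h hh
    refine ⟨l, fun l' hl' => ?_⟩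
    have hP0 : P i (πs (α i) ^ l * h) := ⟨m, f, g, hf, hg, heq⟩
    have : πs (α i) ^ l' * h = πs (α i) ^ (l' - l) * (πs (α i) ^ l * h) := by
      rw [← mul_assoc, ← pow_add]
      congr 2
      omega
    rw [this]
    exact hPα i _ _ hP0
  -- nonzero elements
  have hx : ∀ i, ∃ x : A, x ∈ I i ∧ x ≠ 0 := by
    intro i
    obtain ⟨x, hx1, hx2⟩ := (Submodule.ne_bot_iff (I i)).mp (hIbot i)
    exact ⟨x, hx1, hx2⟩
  choose x hxI hx0 using hx
  set h₀ : A := ∏ i, x i with hh₀def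
  have hh₀I : ∀ i, h₀ ∈ I i := by
    intro i
    have hsplit : x i * ∏ j ∈ Finset.univ.erase i, x j = h₀ := by
      rw [hh₀def]; exact Finset.mul_prod_erase Finset.univ x (Finset.mem_univ i)
    rw [← hsplit]
    exact Ideal.mul_mem_right _ _ (hxI i)
  have hh₀0 : h₀ ≠ 0 := Finset.prod_ne_zero_iff.mpr fun i _ => hx0 i
  set c : A := ∏ i, ξ i (a i) with hcdef
  have hc0 : c ≠ 0 := Finset.prod_ne_zero_iff.mpr fun i _ => ha2 i
  refine ⟨Ideal.span {c * h₀}, ?_, ?_⟩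
  · rw [Ne, Ideal.span_singleton_eq_bot]
    exact mul_ne_zero hc0 hh₀0
  · intro f hf
    obtain ⟨y, hy⟩ := Ideal.mem_span_singleton'.mp hf
    -- the elements h i
    set hh : Fin k → A := fun i => (∏ j ∈ Finset.univ.erase i, ξ j (a j)) * h₀ * y with hhdef
    have hhI : ∀ i, hh i ∈ I i := by
      intro i
      exact Ideal.mul_mem_right _ _ (Ideal.mul_mem_left _ _ (hh₀I i))
    choose l hl using fun i => hIP i (hh i) (hhI i)
    set L := Finset.univ.sup l with hLdef
    obtain ⟨s, hs⟩ := hLtop L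
    have hPi : ∀ i, P i (πs (s i) * (πs (α i) ^ L * hh i)) := by
      intro i
      exact hPmul_ker i _ _ (hl i L (Finset.le_sup (Finset.mem_univ i))) (hηB (s i))
    -- the sum identity
    have hsum : f = ∑ i, ξ i (a i) * (πs (s i) * (πs (α i) ^ L * hh i)) := by
      have expand : ∀ i, ξ i (a i) * (πs (s i) * (πs (α i) ^ L * hh i))
          = πs (s i * α i ^ L) * (c * h₀ * y) := by
        intro i
        rw [hhdef]
        simp only [map_mul, map_pow]
        have : ξ i (a i) * (∏ j ∈ Finset.univ.erase i, ξ j (a j)) = c := by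
          rw [hcdef]
          exact Finset.mul_prod_erase Finset.univ (fun j => ξ j (a j)) (Finset.mem_univ i)
        calc ξ i (a i) * (πs (s i) * (πs (α i) ^ L * ((∏ j ∈ Finset.univ.erase i, ξ j (a j)) * h₀ * y)))
            = (πs (s i) * πs (α i) ^ L) * ((ξ i (a i) * ∏ j ∈ Finset.univ.erase i, ξ j (a j)) * h₀ * y) := by ring
          _ = πs (s i) * πs (α i) ^ L * (c * h₀ * y) := by rw [this]
          _ = _ := by ring
      rw [Finset.sum_congr rfl fun i _ => expand i, ← Finset.sum_mul, ← map_sum, hs, map_one,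
        one_mul, ← hy]
      ring
    rw [hsum, Finset.sum_smul]
    refine Submodule.sum_mem (LieAlgGen A).toSubmodule fun i _ => ?_
    exact hPc i _ (hPi i)
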